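/- Let r ≥ 3 and let S = E_1 ∪ ⋯ ∪ E_{r−1}. For each i with 0 ≤ i ≤ r−1, the number of faces A of (M_r)^{*2}_Δ of cardinality r+i whose maximal containing facet has cardinality exactly 2r−1 equals 2·f_i(M_r|S), where f_i(M_r|S) is the number of faces of cardinality i of the restriction M_r|S. Moreover there are no such faces of cardinality less than r. -/
import Mathlib


/-- Independence in the matroid `M_r` (ground set `Fin r × Fin r`; `(i,j)` is `v_{i+1}^{j+1}`
for `i < r-1` and `w_{j+1}` for `i = r-1`). -/
def MrIndep (r : ℕ) (A : Finset (Fin r × Fin r)) : Prop :=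
  A.card ≤ r ∧ ∀ i : Fin r, (i : ℕ) < r - 1 → (A.filter (fun p => p.1 = i)).card ≤ 1

/-- A face of the `2`-fold deleted join `(M_r)^{*2}_Δ`: a pair of disjoint independent sets. -/
def Face2 (r : ℕ) (p : Finset (Fin r × Fin r) × Finset (Fin r × Fin r)) : Prop :=
  MrIndep r p.1 ∧ MrIndep r p.2 ∧ Disjoint p.1 p.2

/-- `DegEq r p n` says the degree of the face `p` is `n`: some face of cardinality `n`
contains `p`, and every face containing `p` has cardinality at most `n`. -/
def DegEq (r : ℕ) (p : Finset (Fin r × Fin r) × Finset (Fin r × Fin r)) (n : ℕ) : Prop :=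
  (∃ q, Face2 r q ∧ p.1 ⊆ q.1 ∧ p.2 ⊆ q.2 ∧ q.1.card + q.2.card = n) ∧
  (∀ q, Face2 r q → p.1 ⊆ q.1 → p.2 ⊆ q.2 → q.1.card + q.2.card ≤ n)

/-- A face of the restriction `M_r|S`, `S = E_1 ∪ ⋯ ∪ E_{r-1}`. -/
def FaceS (r : ℕ) (A : Finset (Fin r × Fin r)) : Prop :=
  (∀ p ∈ A, (p.1 : ℕ) < r - 1) ∧
  ∀ i : Fin r, (A.filter (fun p => p.1 = i)).card ≤ 1

section Aux

variable {r : ℕ}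

/-- The set `W = {w_1, …, w_r}`, i.e. the last row. -/
def Wset (r : ℕ) : Finset (Fin r × Fin r) :=
  Finset.univ.filter fun p => (p.1 : ℕ) = r - 1

lemma mem_Wset {p : Fin r × Fin r} : p ∈ Wset r ↔ (p.1 : ℕ) = r - 1 := by
  simp [Wset]

lemma Wset_card (hr : 1 ≤ r) : (Wset r).card = r := by
  have h : Wset r = Finset.univ.image (fun j : Fin r => ((⟨r - 1, by omega⟩ : Fin r), j)) := by
    ext p
    simp only [mem_Wset, Finset.mem_image, Finset.mem_univ, true_and]
    constructor
    · intro h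
      exact ⟨p.2, Prod.ext (Fin.ext h.symm) rfl⟩
    · rintro ⟨j, rfl⟩
      rfl
  rw [h, Finset.card_image_of_injective _ (fun a b hab => congrArg Prod.snd hab)]
  simp

lemma card_blocks (hr : 1 ≤ r) :
    (Finset.univ.filter fun i : Fin r => (i : ℕ) < r - 1).card = r - 1 := by
  have h : (Finset.univ.filter fun i : Fin r => ¬ (i : ℕ) < r - 1)
      = {(⟨r - 1, by omega⟩ : Fin r)} := by
    ext i
    simp only [Finset.mem_filter, Finset.mem_univ, true_and, Finset.mem_singleton]
    constructor
    · intro hi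
      have := i.isLt
      exact Fin.ext (show (i : ℕ) = r - 1 by omega)
    · rintro rfl
      show ¬ ((⟨r - 1, by omega⟩ : Fin r) : ℕ) < r - 1
      simp
  have h2 := Finset.card_filter_add_card_filter_not
    (s := (Finset.univ : Finset (Fin r))) (p := fun i : Fin r => (i : ℕ) < r - 1)
  rw [h] at h2
  simp only [Finset.card_singleton, Finset.card_univ, Fintype.card_fin] at h2
  omega

/-- Any set of block elements with at most one per block has at most `r-1` elements. -/
lemma card_le_of_S (C : Finset (Fin r × Fin r))
    (hrow : ∀ p ∈ C, (p.1 : ℕ) < r - 1)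
    (hfib : ∀ i : Fin r, (i : ℕ) < r - 1 → (C.filter fun p => p.1 = i).card ≤ 1) :
    C.card ≤ r - 1 := by
  rcases Nat.eq_zero_or_pos r with rfl | hr
  · simp [Finset.eq_empty_of_isEmpty C]
  have h := Finset.card_eq_sum_card_fiberwise
    (f := fun p : Fin r × Fin r => p.1) (s := C) (t := Finset.univ)
    (fun x _ => Finset.mem_univ _)
  rw [h]
  calc ∑ i : Fin r, (C.filter fun p => p.1 = i).card
      ≤ ∑ i : Fin r, (if (i : ℕ) < r - 1 then 1 else 0) := by
        refine Finset.sum_le_sum fun i _ => ?_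
        by_cases hi : (i : ℕ) < r - 1
        · simpa [hi] using hfib i hi
        · have : (C.filter fun p => p.1 = i) = ∅ := by
            refine Finset.filter_eq_empty_iff.mpr fun p hp => ?_
            intro hpi
            exact hi (hpi ▸ hrow p hp)
          simp [hi, this]
    _ = (Finset.univ.filter fun i : Fin r => (i : ℕ) < r - 1).card := by
        rw [Finset.card_filter]
    _ = r - 1 := card_blocks hr

lemma faceS_card_le (B : Finset (Fin r × Fin r)) (hB : FaceS r B) : B.card ≤ r - 1 :=
  card_le_of_S B hB.1 (fun i _ => hB.2 i)

lemma mrIndep_of_faceS (B : Finset (Fin r × Fin r)) (hB : FaceS r B) : MrIndep r B :=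
  ⟨le_trans (faceS_card_le B hB) (by omega), fun i _ => hB.2 i⟩

lemma faceS_subset {B T : Finset (Fin r × Fin r)} (hT : FaceS r T) (hBT : B ⊆ T) :
    FaceS r B :=
  ⟨fun p hp => hT.1 p (hBT hp),
   fun i => le_trans (Finset.card_le_card (Finset.filter_subset_filter _ hBT)) (hT.2 i)⟩

lemma faceS_of_rows {B : Finset (Fin r × Fin r)} (h : MrIndep r B)
    (hrow : ∀ p ∈ B, (p.1 : ℕ) < r - 1) : FaceS r B := by
  refine ⟨hrow, fun i => ?_⟩
  by_cases hi : (i : ℕ) < r - 1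
  · exact h.2 i hi
  · have : (B.filter fun p => p.1 = i) = ∅ := by
      refine Finset.filter_eq_empty_iff.mpr fun p hp => ?_
      intro hpi
      exact hi (hpi ▸ hrow p hp)
    simp [this]

lemma mrIndep_Wset (hr : 1 ≤ r) : MrIndep r (Wset r) := by
  refine ⟨le_of_eq (Wset_card hr), fun i hi => ?_⟩
  have : ((Wset r).filter fun p => p.1 = i) = ∅ := by
    refine Finset.filter_eq_empty_iff.mpr fun p hp => ?_
    intro hpi
    have := mem_Wset.mp hp
    rw [hpi] at this
    omega
  simp [this]

/-- Disjointness of `Wset` from any set of block elements. -/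
lemma disjoint_Wset {B : Finset (Fin r × Fin r)} (hrow : ∀ p ∈ B, (p.1 : ℕ) < r - 1) :
    Disjoint (Wset r) B := by
  rw [Finset.disjoint_left]
  intro p hp hpB
  have h1 := mem_Wset.mp hp
  have h2 := hrow p hpB
  omega

/-- Extend a face of `M_r|S` to a full transversal of the blocks. -/
lemma exists_transversal (hr : 1 ≤ r) (B : Finset (Fin r × Fin r)) (hB : FaceS r B) :
    ∃ T, B ⊆ T ∧ T.card = r - 1 ∧ FaceS r T := by
  classical
  have h0 : (0 : ℕ) < r := hr
  set g : Fin r → Fin r × Fin r := fun i =>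
    if h : (B.filter fun p => p.1 = i).Nonempty then h.choose else (i, ⟨0, h0⟩) with hg
  have hg1 : ∀ i, (g i).1 = i := by
    intro i
    by_cases h : (B.filter fun p => p.1 = i).Nonempty
    · simp only [hg, dif_pos h]
      exact (Finset.mem_filter.mp h.choose_spec).2
    · simp [hg, dif_neg h]
  have hg2 : ∀ p ∈ B, g p.1 = p := by
    intro p hp
    have hmem : p ∈ B.filter fun q => q.1 = p.1 := Finset.mem_filter.mpr ⟨hp, rfl⟩
    have hne : (B.filter fun q => q.1 = p.1).Nonempty := ⟨p, hmem⟩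
    simp only [hg, dif_pos hne]
    exact Finset.card_le_one.mp (hB.2 p.1) _ hne.choose_spec _ hmem
  refine ⟨(Finset.univ.filter fun i : Fin r => (i : ℕ) < r - 1).image g, ?_, ?_, ?_, ?_⟩
  · intro p hp
    refine Finset.mem_image.mpr ⟨p.1, ?_, hg2 p hp⟩
    simp [hB.1 p hp]
  · rw [Finset.card_image_of_injOn, card_blocks hr]
    intro a _ b _ hab
    rw [← hg1 a, ← hg1 b, hab]
  · intro p hp
    obtain ⟨i, hi, rfl⟩ := Finset.mem_image.mp hp
    rw [hg1 i]
    exact (Finset.mem_filter.mp hi).2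
  · intro i
    have hsub : (((Finset.univ.filter fun i : Fin r => (i : ℕ) < r - 1).image g).filter
        fun p => p.1 = i) ⊆ {g i} := by
      intro p hp
      obtain ⟨hp1, hp2⟩ := Finset.mem_filter.mp hp
      obtain ⟨j, hj, rfl⟩ := Finset.mem_image.mp hp1
      have hji : j = i := by rw [← hg1 j]; exact hp2
      simp [hji]
    exact le_trans (Finset.card_le_card hsub) (by simp)

/-- In any block there is a free column, provided the blocking set has ≤ 1 element there. -/
lemma exists_col (hr : 3 ≤ r) (C : Finset (Fin r × Fin r)) (i : Fin r)
    (h : (C.filter fun p => p.1 = i).card ≤ 1) : ∃ c : Fin r, (i, c) ∉ C := by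
  by_contra hcon
  push_neg at hcon
  have hsub : Finset.univ.image (fun c : Fin r => (i, c)) ⊆ C.filter fun p => p.1 = i := by
    intro p hp
    obtain ⟨c, _, rfl⟩ := Finset.mem_image.mp hp
    exact Finset.mem_filter.mpr ⟨hcon c, rfl⟩
  have hcard : r ≤ (C.filter fun p => p.1 = i).card := by
    calc r = (Finset.univ.image (fun c : Fin r => (i, c))).card := by
          rw [Finset.card_image_of_injective _ (fun a b hab => congrArg Prod.snd hab)]
          simp
      _ ≤ _ := Finset.card_le_card hsub
  omega

/-- A maximal face of total cardinality `2r-1` (with the big side of size `r`)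
must be of the form `(W, full transversal)`. -/
lemma key (hr : 3 ≤ r) (q1 q2 : Finset (Fin r × Fin r))
    (h1 : MrIndep r q1) (h2 : MrIndep r q2) (hd : Disjoint q1 q2)
    (hc1 : q1.card = r) (hc2 : q2.card = r - 1)
    (hmax : ∀ x, x ∉ q1 → x ∉ q2 → ¬ MrIndep r (insert x q2)) :
    q1 = Wset r ∧ FaceS r q2 := by
  classical
  -- Step A : W ⊆ q1 ∪ q2
  have hA : ∀ w : Fin r × Fin r, (w.1 : ℕ) = r - 1 → w ∈ q1 ∪ q2 := by
    intro w hw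
    by_contra hcon
    simp only [Finset.mem_union, not_or] at hcon
    refine hmax w hcon.1 hcon.2 ?_
    constructor
    · rw [Finset.card_insert_of_notMem hcon.2, hc2]; omega
    · intro i hi
      rw [Finset.filter_insert, if_neg]
      · exact h2.2 i hi
      · intro hwi
        rw [hwi] at hw
        omega
  -- Step B : every block meets q2
  have hB : ∀ i : Fin r, (i : ℕ) < r - 1 → ∃ p ∈ q2, p.1 = i := by
    intro i hi
    by_contra hcon
    push_neg at hcon
    have hfib : (q2.filter fun p => p.1 = i) = ∅ :=
      Finset.filter_eq_empty_iff.mpr hcon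
    obtain ⟨c, hc⟩ := exists_col hr q1 i (h1.2 i hi)
    have hc2' : (i, c) ∉ q2 := fun h => hcon _ h rfl
    refine hmax (i, c) hc hc2' ?_
    constructor
    · rw [Finset.card_insert_of_notMem hc2', hc2]; omega
    · intro j hj
      rw [Finset.filter_insert]
      by_cases hij : (i, c).1 = j
      · rw [if_pos hij]
        have : (q2.filter fun p => p.1 = j) = ∅ := by
          rw [← hij]; exact hfib
        rw [this]
        simp
      · rw [if_neg hij]
        exact h2.2 j hj
  -- Step C : all rows of q2 are < r - 1
  have hrow : ∀ p ∈ q2, (p.1 : ℕ) < r - 1 := by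
    have hsub : (Finset.univ.filter fun i : Fin r => (i : ℕ) < r - 1) ⊆ q2.image Prod.fst := by
      intro i hi
      obtain ⟨p, hp, hpi⟩ := hB i (Finset.mem_filter.mp hi).2
      exact Finset.mem_image.mpr ⟨p, hp, hpi⟩
    have hcardle : (q2.image Prod.fst).card ≤ r - 1 := le_trans Finset.card_image_le hc2.le
    have heq : (Finset.univ.filter fun i : Fin r => (i : ℕ) < r - 1) = q2.image Prod.fst := by
      apply Finset.eq_of_subset_of_card_le hsub
      rw [card_blocks (by omega : 1 ≤ r)]
      exact hcardle
    intro p hp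
    have : p.1 ∈ q2.image Prod.fst := Finset.mem_image.mpr ⟨p, hp, rfl⟩
    rw [← heq] at this
    exact (Finset.mem_filter.mp this).2
  have hfaceS : FaceS r q2 := faceS_of_rows h2 hrow
  refine ⟨?_, hfaceS⟩
  -- Step D : q1 = W
  have hWsub : Wset r ⊆ q1 := by
    intro w hw
    have hw1 := mem_Wset.mp hw
    rcases Finset.mem_union.mp (hA w hw1) with h | h
    · exact h
    · exact absurd (hrow w h) (by omega)
  exact (Finset.eq_of_subset_of_card_le hWsub (by rw [hc1, Wset_card (by omega : 1 ≤ r)])).symm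

lemma face2_swap {p : Finset (Fin r × Fin r) × Finset (Fin r × Fin r)}
    (h : Face2 r p) : Face2 r (p.2, p.1) :=
  ⟨h.2.1, h.1, h.2.2.symm⟩

/-- One half of the classification. -/
lemma half (hr : 3 ≤ r) (p q : Finset (Fin r × Fin r) × Finset (Fin r × Fin r))
    (hq : Face2 r q) (h1 : p.1 ⊆ q.1) (h2 : p.2 ⊆ q.2)
    (hc1 : q.1.card = r) (hc2 : q.2.card = r - 1)
    (hub : ∀ q', Face2 r q' → p.1 ⊆ q'.1 → p.2 ⊆ q'.2 →
      q'.1.card + q'.2.card ≤ 2 * r - 1) :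
    p.1 = Wset r ∧ FaceS r p.2 := by
  classical
  have hmax : ∀ x, x ∉ q.1 → x ∉ q.2 → ¬ MrIndep r (insert x q.2) := by
    intro x hx1 hx2 hind
    have hface : Face2 r (q.1, insert x q.2) := by
      refine ⟨hq.1, hind, ?_⟩
      rw [Finset.disjoint_insert_right]
      exact ⟨hx1, hq.2.2⟩
    have := hub (q.1, insert x q.2) hface h1 (Finset.Subset.trans h2 (Finset.subset_insert _ _))
    simp only at this
    rw [Finset.card_insert_of_notMem hx2, hc1, hc2] at this
    omega
  obtain ⟨hq1W, hq2S⟩ := key hr q.1 q.2 hq.1 hq.2.1 hq.2.2 hc1 hc2 hmax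
  have hp2S : FaceS r p.2 := faceS_subset hq2S h2
  refine ⟨?_, hp2S⟩
  -- show p.1 = W
  by_contra hne
  have hp1W : p.1 ⊆ Wset r := hq1W ▸ h1
  obtain ⟨w, hwW, hwp⟩ := Finset.exists_of_ssubset (lt_of_le_of_ne hp1W hne)
  -- a free element in block 0
  have h0lt : (0 : ℕ) < r - 1 := by omega
  set i0 : Fin r := ⟨0, by omega⟩ with hi0
  obtain ⟨c, hc⟩ := exists_col hr q.2 i0 (hq2S.2 i0)
  set x : Fin r × Fin r := (i0, c) with hx
  have hxrow : (x.1 : ℕ) = 0 := rfl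
  have hxW : x ∉ Wset r := by
    rw [mem_Wset]
    omega
  -- Build the contradicting face
  set A : Finset (Fin r × Fin r) := insert x ((Wset r).erase w) with hA
  set B : Finset (Fin r × Fin r) := insert w q.2 with hB
  have hwrow := mem_Wset.mp hwW
  have hwq2 : w ∉ q.2 := fun h => by have := hq2S.1 w h; omega
  have hxe : x ∉ (Wset r).erase w := fun h => hxW (Finset.mem_erase.mp h).2
  have hAcard : A.card = r := by
    rw [hA, Finset.card_insert_of_notMem hxe, Finset.card_erase_of_mem hwW,
      Wset_card (by omega : 1 ≤ r)]
    omega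
  have hBcard : B.card = r := by
    rw [hB, Finset.card_insert_of_notMem hwq2, hc2]
    omega
  have hAind : MrIndep r A := by
    refine ⟨hAcard.le, fun i hi => ?_⟩
    have hsub : (A.filter fun p => p.1 = i) ⊆ {x} := by
      intro z hz
      obtain ⟨hz1, hz2⟩ := Finset.mem_filter.mp hz
      rw [hA, Finset.mem_insert] at hz1
      rcases hz1 with rfl | hz1
      · exact Finset.mem_singleton_self _
      · have := mem_Wset.mp (Finset.mem_erase.mp hz1).2
        rw [hz2] at this
        omega
    exact le_trans (Finset.card_le_card hsub) (by simp)
  have hBind : MrIndep r B := by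
    refine ⟨hBcard.le, fun i hi => ?_⟩
    rw [hB, Finset.filter_insert, if_neg]
    · exact hq.2.1.2 i hi
    · intro hwi
      rw [hwi] at hwrow
      omega
  have hABdisj : Disjoint A B := by
    rw [Finset.disjoint_left]
    intro z hzA hzB
    rw [hA, Finset.mem_insert] at hzA
    rw [hB, Finset.mem_insert] at hzB
    rcases hzA with rfl | hzA
    · rcases hzB with hzw | hzq
      · rw [hzw] at hxrow; omega
      · exact hc hzq
    · obtain ⟨hzw, hzW⟩ := Finset.mem_erase.mp hzA
      rcases hzB with hzw' | hzq
      · exact hzw hzw'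
      · have := mem_Wset.mp hzW
        have := hq2S.1 z hzq
        omega
  have hp1A : p.1 ⊆ A := by
    intro z hz
    refine Finset.mem_insert_of_mem (Finset.mem_erase.mpr ⟨?_, hp1W hz⟩)
    rintro rfl
    exact hwp hz
  have hp2B : p.2 ⊆ B := Finset.Subset.trans h2 (Finset.subset_insert _ _)
  have := hub (A, B) ⟨hAind, hBind, hABdisj⟩ hp1A hp2B
  simp only at this
  rw [hAcard, hBcard] at this
  omega

/-- Classification of the faces with degree `2r - 1`. -/
lemma classify (hr : 3 ≤ r) (p : Finset (Fin r × Fin r) × Finset (Fin r × Fin r))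
    (hd : DegEq r p (2 * r - 1)) :
    (p.1 = Wset r ∧ FaceS r p.2) ∨ (p.2 = Wset r ∧ FaceS r p.1) := by
  obtain ⟨⟨q, hq, hq1, hq2, hqc⟩, hub⟩ := hd
  have hle1 : q.1.card ≤ r := hq.1.1
  have hle2 : q.2.card ≤ r := hq.2.1.1
  rcases (by omega : (q.1.card = r ∧ q.2.card = r - 1) ∨ (q.2.card = r ∧ q.1.card = r - 1))
    with ⟨a, b⟩ | ⟨a, b⟩
  · exact Or.inl (half hr p q hq hq1 hq2 a b hub)
  · refine Or.inr (half hr (p.2, p.1) (q.2, q.1) (face2_swap hq) hq2 hq1 a b ?_)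
    intro q' hq' ha hb
    have := hub (q'.2, q'.1) (face2_swap hq') hb ha
    simpa [Nat.add_comm] using this

/-- Any pair `(W, B)` is a face of degree exactly `2r - 1`. -/
lemma degEq_W (hr : 3 ≤ r) (B : Finset (Fin r × Fin r)) (hB : FaceS r B) :
    Face2 r (Wset r, B) ∧ DegEq r (Wset r, B) (2 * r - 1) := by
  have hface : Face2 r (Wset r, B) :=
    ⟨mrIndep_Wset (by omega), mrIndep_of_faceS B hB, disjoint_Wset hB.1⟩
  refine ⟨hface, ?_, ?_⟩
  · obtain ⟨T, hBT, hTcard, hTS⟩ := exists_transversal (by omega : 1 ≤ r) B hB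
    refine ⟨(Wset r, T), ⟨mrIndep_Wset (by omega), mrIndep_of_faceS T hTS,
      disjoint_Wset hTS.1⟩, Finset.Subset.refl _, hBT, ?_⟩
    simp only
    rw [Wset_card (by omega : 1 ≤ r), hTcard]
    omega
  · intro q' hq' h1 h2
    have hrow : ∀ z ∈ q'.2, (z.1 : ℕ) < r - 1 := by
      intro z hz
      have hzW : z ∉ Wset r := fun h =>
        Finset.disjoint_left.mp hq'.2.2 (h1 h) hz
      have := mem_Wset.not.mp hzW
      have := z.1.isLt
      omega
    have h2c : q'.2.card ≤ r - 1 :=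
      card_le_of_S q'.2 hrow (fun i hi => hq'.2.1.2 i hi)
    have h1c : q'.1.card ≤ r := hq'.1.1
    omega

lemma degEq_swap {p : Finset (Fin r × Fin r) × Finset (Fin r × Fin r)} {n : ℕ}
    (h : DegEq r p n) : DegEq r (p.2, p.1) n := by
  obtain ⟨⟨q, hq, h1, h2, hc⟩, hub⟩ := h
  refine ⟨⟨(q.2, q.1), face2_swap hq, h2, h1, by simpa [Nat.add_comm] using hc⟩, ?_⟩
  intro q' hq' ha hb
  have := hub (q'.2, q'.1) (face2_swap hq') hb ha
  simpa [Nat.add_comm] using this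

end Aux

/-- For `0 ≤ i ≤ r-1`, the number of faces of `(M_r)^{*2}_Δ` of cardinality `r+i` whose
maximal containing facet has cardinality exactly `2r-1` equals `2 ⬝ f_i(M_r|S)`; and there
are no such faces of cardinality less than `r`. -/
theorem stmt6 (r : ℕ) (hr : 3 ≤ r) :
    (∀ i : ℕ, i ≤ r - 1 →
      {p : Finset (Fin r × Fin r) × Finset (Fin r × Fin r) |
        Face2 r p ∧ p.1.card + p.2.card = r + i ∧ DegEq r p (2 * r - 1)}.ncard =
      2 * {A : Finset (Fin r × Fin r) | FaceS r A ∧ A.card = i}.ncard) ∧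
    (∀ p : Finset (Fin r × Fin r) × Finset (Fin r × Fin r),
      Face2 r p → DegEq r p (2 * r - 1) → r ≤ p.1.card + p.2.card) := by
  have hW := Wset_card (show 1 ≤ r by omega)
  constructor
  · intro i hi
    have hset : {p : Finset (Fin r × Fin r) × Finset (Fin r × Fin r) |
        Face2 r p ∧ p.1.card + p.2.card = r + i ∧ DegEq r p (2 * r - 1)}
        = (fun B : Finset (Fin r × Fin r) => (Wset r, B)) '' {A | FaceS r A ∧ A.card = i} ∪
          (fun B : Finset (Fin r × Fin r) => (B, Wset r)) '' {A | FaceS r A ∧ A.card = i} := by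
      ext p
      simp only [Set.mem_setOf_eq, Set.mem_union, Set.mem_image]
      constructor
      · rintro ⟨hp, hcard, hd⟩
        rcases classify hr p hd with ⟨h1, h2⟩ | ⟨h1, h2⟩
        · left
          refine ⟨p.2, ⟨h2, ?_⟩, ?_⟩
          · have hc1 : p.1.card = r := by rw [h1, hW]
            omega
          · exact Prod.ext h1.symm rfl
        · right
          refine ⟨p.1, ⟨h2, ?_⟩, ?_⟩
          · have hc2 : p.2.card = r := by rw [h1, hW]
            omega
          · exact Prod.ext rfl h1.symm
      · rintro (⟨B, ⟨hB, hBc⟩, rfl⟩ | ⟨B, ⟨hB, hBc⟩, rfl⟩)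
        · obtain ⟨hface, hdeg⟩ := degEq_W hr B hB
          refine ⟨hface, ?_, hdeg⟩
          show (Wset r).card + B.card = r + i
          rw [hW, hBc]
        · obtain ⟨hface, hdeg⟩ := degEq_W hr B hB
          refine ⟨face2_swap hface, ?_, degEq_swap hdeg⟩
          show B.card + (Wset r).card = r + i
          rw [hW, hBc]
          omega
    have hinj1 : Function.Injective
        (fun B : Finset (Fin r × Fin r) => ((Wset r : Finset (Fin r × Fin r)), B)) :=
      fun a b hab => congrArg Prod.snd hab
    have hinj2 : Function.Injective
        (fun B : Finset (Fin r × Fin r) => (B, (Wset r : Finset (Fin r × Fin r)))) :=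
      fun a b hab => congrArg Prod.fst hab
    have hdisj : Disjoint
        ((fun B : Finset (Fin r × Fin r) => (Wset r, B)) '' {A | FaceS r A ∧ A.card = i})
        ((fun B : Finset (Fin r × Fin r) => (B, Wset r)) '' {A | FaceS r A ∧ A.card = i}) := by
      rw [Set.disjoint_left]
      rintro a ⟨B, hB, rfl⟩ ⟨B', hB', heq⟩
      have hfst : B' = Wset r := congrArg Prod.fst heq
      have hBW : FaceS r (Wset r) := hfst ▸ hB'.1
      have hmem : ((⟨r - 1, by omega⟩ : Fin r), (⟨0, by omega⟩ : Fin r)) ∈ Wset r :=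
        mem_Wset.mpr rfl
      have := hBW.1 _ hmem
      exact absurd this (lt_irrefl (r - 1))
    rw [hset, Set.ncard_union_eq hdisj (Set.toFinite _) (Set.toFinite _),
      Set.ncard_image_of_injective _ hinj1, Set.ncard_image_of_injective _ hinj2]
    omega
  · intro p hp hd
    rcases classify hr p hd with ⟨h1, _⟩ | ⟨h1, _⟩
    · have hc : p.1.card = r := by rw [h1, hW]
      omega
    · have hc : p.2.card = r := by rw [h1, hW]
      omega
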